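/- There exists a first-order structure (Q', <, f), where (Q', <) is a countable dense linear order without endpoints and f is a unary function, satisfying: f is strictly order-preserving; if x < f(y) then x is in the range of f; the range of f is bounded above; for every upper bound y of the range of f there is a strictly smaller upper bound y' < y; and f(x) < x for all x. -/

import Mathlib

open Classical

/-- membership predicate: positive, or not a (nonpositive) integer -/
def Pmem (q : ℚ) : Prop := 0 < q ∨ ∀ n : ℤ, (n : ℚ) ≠ q

/-- the function: `q - 1` on nonpositives, `-1/(q+1)` on positives -/
noncomputable def g (q : ℚ) : ℚ := if 0 < q then -1 / (q + 1) else q - 1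

lemma g_neg (q : ℚ) : g q < 0 := by
  unfold g; split
  · apply div_neg_of_neg_of_pos <;> linarith
  · linarith [le_of_not_gt (by assumption : ¬ 0 < q)]

lemma g_mono : StrictMono g := by
  intro x y hxy
  unfold g
  rcases lt_or_ge 0 x with hx | hx
  · rw [if_pos hx, if_pos (hx.trans hxy)]
    rw [div_lt_div_iff₀ (by linarith) (by linarith)]
    nlinarith
  · rw [if_neg (not_lt.2 hx)]
    rcases lt_or_ge 0 y with hy | hy
    · rw [if_pos hy]
      have : -1 / (y + 1) > -1 := by
        rw [gt_iff_lt, lt_div_iff₀ (by linarith)]; nlinarith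
      linarith
    · rw [if_neg (not_lt.2 hy)]; linarith

lemma g_mem {q : ℚ} (h : Pmem q) : Pmem (g q) := by
  unfold g
  rcases h with h | h
  · rw [if_pos h]
    right
    intro n hn
    have h1 : -1 / (q + 1) < 0 := by apply div_neg_of_neg_of_pos <;> linarith
    have h2 : (-1 : ℚ) < -1 / (q + 1) := by
      rw [lt_div_iff₀ (by linarith)]; nlinarith
    rw [← hn] at h1 h2
    have : n < 0 := by exact_mod_cast h1
    have : (-1 : ℤ) < n := by exact_mod_cast h2
    omega
  · rcases lt_or_ge 0 q with hq | hq
    · rw [if_pos hq]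
      right
      intro n hn
      have h1 : -1 / (q + 1) < 0 := by apply div_neg_of_neg_of_pos <;> linarith
      have h2 : (-1 : ℚ) < -1 / (q + 1) := by
        rw [lt_div_iff₀ (by linarith)]; nlinarith
      rw [← hn] at h1 h2
      have : n < 0 := by exact_mod_cast h1
      have : (-1 : ℤ) < n := by exact_mod_cast h2
      omega
    · rw [if_neg (not_lt.2 hq)]
      right
      intro n hn
      exact h (n + 1) (by push_cast; linarith)

lemma g_lt (q : ℚ) : g q < q := by
  unfold g; split
  · have : -1 / (q + 1) < 0 := by apply div_neg_of_neg_of_pos <;> linarith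
    linarith
  · linarith

/-- every negative member is in the image of `g` restricted to members -/
lemma g_surj {x : ℚ} (hx : Pmem x) (hneg : x < 0) : ∃ z, Pmem z ∧ g z = x := by
  have hni : ∀ n : ℤ, (n : ℚ) ≠ x := by
    rcases hx with h | h
    · linarith
    · exact h
  rcases lt_trichotomy x (-1) with h | h | h
  · refine ⟨x + 1, Or.inr fun n hn => hni (n - 1) (by push_cast; linarith), ?_⟩
    rw [g, if_neg (by push_neg; linarith)]; ring
  · exact (hni (-1) (by rw [h]; norm_num)).elim
  · have hxne : x ≠ 0 := ne_of_lt hneg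
    refine ⟨-1 / x - 1, Or.inl ?_, ?_⟩
    · have : 1 < -1 / x := by
        rw [lt_div_iff_of_neg hneg]; linarith
      linarith
    · have hpos : 0 < -1 / x - 1 := by
        have : 1 < -1 / x := by rw [lt_div_iff_of_neg hneg]; linarith
        linarith
      rw [g, if_pos hpos]
      field_simp
      ring

theorem stmt_3 :
    ∃ (Q' : Type) (lt : Q' → Q' → Prop) (f : Q' → Q'),
      Countable Q' ∧ Nonempty Q' ∧
      (∀ x, ¬ lt x x) ∧
      (∀ x y z, lt x y → lt y z → lt x z) ∧
      (∀ x y, x = y ∨ lt x y ∨ lt y x) ∧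
      (∀ x y, lt x y → ∃ z, lt x z ∧ lt z y) ∧
      (∀ x, ∃ y, lt x y) ∧
      (∀ x, ∃ y, lt y x) ∧
      (∀ x y, lt x y ↔ lt (f x) (f y)) ∧
      (∀ x y, lt x (f y) → ∃ z, f z = x) ∧
      (∃ b, ∀ x, lt (f x) b) ∧
      (∀ b, (∀ x, lt (f x) b) → ∃ b', lt b' b ∧ ∀ x, lt (f x) b') ∧
      (∀ x, lt (f x) x) := by
  refine ⟨{q : ℚ // Pmem q}, fun a b => a.1 < b.1,
    fun a => ⟨g a.1, g_mem a.2⟩, inferInstance, ⟨⟨1, Or.inl one_pos⟩⟩,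
    fun x => lt_irrefl _, fun x y z => lt_trans,
    fun x y => ?_, fun x y hxy => ?_,
    fun x => ⟨⟨x.1 + 1, ?_⟩, by simp⟩,
    fun x => ⟨⟨g x.1, g_mem x.2⟩, g_lt x.1⟩,
    fun x y => ⟨fun h => g_mono h, fun h => ?_⟩,
    fun x y hxy => ?_,
    ⟨⟨1, Or.inl one_pos⟩, fun x => lt_trans (g_neg x.1) one_pos⟩,
    fun b hb => ?_, fun x => g_lt x.1⟩
  · -- trichotomy
    rcases lt_trichotomy x.1 y.1 with h | h | h
    · exact Or.inr (Or.inl h)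
    · exact Or.inl (Subtype.ext h)
    · exact Or.inr (Or.inr h)
  · -- density
    set c := (x.1 + y.1) / 2 with hc
    have hxc : x.1 < c := by simp only [hc]; linarith
    have hcy : c < y.1 := by simp only [hc]; linarith
    by_cases hP : Pmem c
    · exact ⟨⟨c, hP⟩, hxc, hcy⟩
    · -- c is an integer
      unfold Pmem at hP
      push_neg at hP
      obtain ⟨-, n, hn⟩ := hP
      set t := min ((y.1 - c) / 2) (1 / 2) with ht
      have ht0 : 0 < t := lt_min (by linarith) (by norm_num)
      have ht1 : t ≤ 1 / 2 := min_le_right _ _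
      have ht2 : t ≤ (y.1 - c) / 2 := min_le_left _ _
      refine ⟨⟨c + t, Or.inr fun m hm => ?_⟩, show x.1 < c + t by linarith,
        show c + t < y.1 by linarith⟩
      have : (m : ℚ) - n = t := by rw [hm, ← hn]; ring
      have h1 : (0 : ℚ) < m - n := by rw [this]; exact ht0
      have h2 : (m : ℚ) - n < 1 := by rw [this]; linarith
      have h1' : 0 < m - n := by exact_mod_cast h1
      have h2' : m - n < 1 := by exact_mod_cast h2
      omega
  · -- no left endpoint for x+1
    rcases x.2 with h | h
    · exact Or.inl (by linarith)
    · exact Or.inr fun n hn => h (n - 1) (by push_cast; linarith)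
  · -- reflect
    by_contra hne
    rcases lt_trichotomy x.1 y.1 with h' | h' | h'
    · exact hne h'
    · simp only [h'] at h; exact lt_irrefl _ h
    · exact absurd (g_mono h') (not_lt.2 (le_of_lt h))
  · -- initial on image
    have hxneg : x.1 < 0 := lt_trans hxy (g_neg y.1)
    obtain ⟨z, hz, hgz⟩ := g_surj x.2 hxneg
    exact ⟨⟨z, hz⟩, Subtype.ext hgz⟩
  · -- smaller upper bound
    have hb0 : 0 < b.1 := by
      by_contra h
      push_neg at h
      have hbneg : b.1 < 0 := by
        rcases lt_or_eq_of_le h with h' | h'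
        · exact h'
        · rcases b.2 with h2 | h2
          · linarith
          · exact (h2 0 (by exact_mod_cast h'.symm)).elim
      obtain ⟨z, hz, hgz⟩ := g_surj b.2 hbneg
      have := hb ⟨z, hz⟩
      simp only [hgz] at this
      exact lt_irrefl _ this
    exact ⟨⟨b.1 / 2, Or.inl (by linarith)⟩, show b.1 / 2 < b.1 by linarith,
      fun x => lt_trans (g_neg x.1) (by linarith)⟩
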